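/- Let M, N ≥ 1, let C ∈ ℝ^{M×N} and ψ ∈ ℝ^N with Cψ ≠ 0, and define the partial-trace deviation measure D_ψ(C) = ‖C‖_F² − ‖CᵀCψ‖²/‖Cψ‖². Then: (i) D_ψ(C) equals the minimum over c₂ ∈ ℝ^N of ‖C − (Cψ)c₂ᵀ‖_F², so in particular D_ψ(C) ≥ 0; and (ii) D_ψ(C) = 0 if and only if C is separable, i.e. there exist vectors η₁ ∈ ℝ^M and η₂ ∈ ℝ^N with C = η₁η₂ᵀ. -/

import Mathlib

open scoped BigOperators
open Matrix

noncomputable section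

/-- Squared Frobenius norm of a real matrix: `‖A‖_F² = ∑ᵢⱼ A i j ^ 2`. -/
def frobSq {M N : ℕ} (A : Matrix (Fin M) (Fin N) ℝ) : ℝ := ∑ i, ∑ j, A i j ^ 2

/-- Squared Euclidean norm of a vector. -/
def vnormSq {n : ℕ} (x : Fin n → ℝ) : ℝ := ∑ i, x i ^ 2

/-- for `C ∈ ℝ^{M×N}`, `ψ ∈ ℝ^N` with `Cψ ≠ 0`, the partial-trace
deviation `D_ψ(C) = ‖C‖_F² − ‖CᵀCψ‖²/‖Cψ‖²` is (i) the minimum over `c₂` of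
`‖C − (Cψ)c₂ᵀ‖_F²` (hence `D_ψ(C) ≥ 0`), and (ii) `D_ψ(C) = 0` iff `C` is
separable, i.e. `C = η₁η₂ᵀ` for some vectors `η₁, η₂`. -/
theorem statement1 (M N : ℕ) (hM : 1 ≤ M) (hN : 1 ≤ N)
    (C : Matrix (Fin M) (Fin N) ℝ) (ψ : Fin N → ℝ) (hψ : C.mulVec ψ ≠ 0) :
    IsLeast {r : ℝ | ∃ c₂ : Fin N → ℝ, r = frobSq (C - vecMulVec (C.mulVec ψ) c₂)}
        (frobSq C - vnormSq (Cᵀ.mulVec (C.mulVec ψ)) / vnormSq (C.mulVec ψ)) ∧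
      0 ≤ frobSq C - vnormSq (Cᵀ.mulVec (C.mulVec ψ)) / vnormSq (C.mulVec ψ) ∧
      (frobSq C - vnormSq (Cᵀ.mulVec (C.mulVec ψ)) / vnormSq (C.mulVec ψ) = 0 ↔
        ∃ (η₁ : Fin M → ℝ) (η₂ : Fin N → ℝ), C = vecMulVec η₁ η₂) := by
  set v := C.mulVec ψ with hv
  have ha0 : 0 ≤ vnormSq v := Finset.sum_nonneg fun i _ => sq_nonneg _
  have hane : vnormSq v ≠ 0 := by
    intro h
    apply hψ
    funext i
    have := (Finset.sum_eq_zero_iff_of_nonneg (fun i _ => sq_nonneg (v i))).mp h i (Finset.mem_univ i)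
    exact pow_eq_zero_iff two_ne_zero |>.mp this
  set a := vnormSq v with hva
  set w := Cᵀ.mulVec v with hw
  have hwj : ∀ j, w j = ∑ i, C i j * v i := by
    intro j
    simp [hw, Matrix.mulVec, dotProduct, Matrix.transpose_apply]
  have haeq : a = ∑ i, v i ^ 2 := rfl
  set D := frobSq C - vnormSq w / a with hD
  have key : ∀ c₂ : Fin N → ℝ,
      frobSq (C - vecMulVec v c₂)
        = D + ∑ j, a * (c₂ j - w j / a) ^ 2 := by
    intro c₂
    have h1 : frobSq (C - vecMulVec v c₂)
        = ∑ j, ((∑ i, C i j ^ 2) - 2 * w j * c₂ j + a * c₂ j ^ 2) := by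
      rw [frobSq, Finset.sum_comm]
      refine Finset.sum_congr rfl fun j _ => ?_
      rw [hwj j, haeq]
      have he : ∀ i, (C - vecMulVec v c₂) i j ^ 2
          = C i j ^ 2 - 2 * (C i j * v i) * c₂ j + v i ^ 2 * c₂ j ^ 2 := by
        intro i
        simp only [Matrix.sub_apply, Matrix.vecMulVec_apply]
        ring
      simp only [he, Finset.sum_add_distrib, Finset.sum_sub_distrib, ← Finset.sum_mul,
        Finset.mul_sum]
      try ring
    have h2 : D + ∑ j, a * (c₂ j - w j / a) ^ 2
        = ∑ j, ((∑ i, C i j ^ 2) - 2 * w j * c₂ j + a * c₂ j ^ 2) := by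
      have hfc : frobSq C = ∑ j, ∑ i, C i j ^ 2 := Finset.sum_comm ..
      have hws : vnormSq w / a = ∑ j, w j ^ 2 / a := by
        rw [vnormSq, Finset.sum_div]
      have hterm : ∀ j, a * (c₂ j - w j / a) ^ 2
          = a * c₂ j ^ 2 - 2 * w j * c₂ j + w j ^ 2 / a := by
        intro j
        field_simp
        ring
      rw [hD, hfc, hws]
      simp only [hterm]
      rw [Finset.sum_add_distrib, Finset.sum_sub_distrib, Finset.sum_add_distrib,
        Finset.sum_sub_distrib]
      ring
    rw [h1, h2]
  have hmem : D ∈ {r : ℝ | ∃ c₂ : Fin N → ℝ, r = frobSq (C - vecMulVec v c₂)} := by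
    refine ⟨fun j => w j / a, ?_⟩
    rw [key]
    simp
  have hlb : ∀ r ∈ {r : ℝ | ∃ c₂ : Fin N → ℝ, r = frobSq (C - vecMulVec v c₂)}, D ≤ r := by
    rintro r ⟨c₂, rfl⟩
    rw [key]
    have : 0 ≤ ∑ j, a * (c₂ j - w j / a) ^ 2 :=
      Finset.sum_nonneg fun j _ => mul_nonneg ha0 (sq_nonneg _)
    linarith
  have hfrobnn : ∀ A : Matrix (Fin M) (Fin N) ℝ, 0 ≤ frobSq A := fun A =>
    Finset.sum_nonneg fun i _ => Finset.sum_nonneg fun j _ => sq_nonneg _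
  have hDnn : 0 ≤ D := by
    obtain ⟨c₂, hc₂⟩ := hmem
    rw [hc₂]; exact hfrobnn _
  refine ⟨⟨hmem, hlb⟩, hDnn, ?_, ?_⟩
  · -- D = 0 → separable
    intro hD0
    obtain ⟨c₂, hc₂⟩ := hmem
    refine ⟨v, c₂, ?_⟩
    have hz : frobSq (C - vecMulVec v c₂) = 0 := by rw [← hc₂, hD0]
    have hentry : ∀ i j, (C - vecMulVec v c₂) i j = 0 := by
      intro i j
      have h1 := (Finset.sum_eq_zero_iff_of_nonneg
        (fun i _ => Finset.sum_nonneg fun j _ => sq_nonneg ((C - vecMulVec v c₂) i j))).mp hz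
        i (Finset.mem_univ i)
      have h2 := (Finset.sum_eq_zero_iff_of_nonneg
        (fun j _ => sq_nonneg ((C - vecMulVec v c₂) i j))).mp h1 j (Finset.mem_univ j)
      exact pow_eq_zero_iff two_ne_zero |>.mp h2
    funext i j
    have := hentry i j
    simp only [Matrix.sub_apply] at this
    linarith
  · -- separable → D = 0
    rintro ⟨η₁, η₂, rfl⟩
    set t := ∑ j, η₂ j * ψ j with ht
    have hvt : ∀ i, v i = η₁ i * t := by
      intro i
      simp [hv, Matrix.mulVec, dotProduct, Matrix.vecMulVec_apply, ht, Finset.mul_sum, mul_assoc]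
    have htne : t ≠ 0 := by
      intro h0
      apply hψ
      funext i
      rw [hvt i] at *
      simp [hvt i, h0]
    have hCeq : (vecMulVec η₁ η₂ : Matrix (Fin M) (Fin N) ℝ)
        = vecMulVec v (fun j => η₂ j / t) := by
      funext i j
      simp only [Matrix.vecMulVec_apply, hvt i]
      field_simp
    have h0mem : (0 : ℝ) ∈ {r : ℝ | ∃ c₂ : Fin N → ℝ,
        r = frobSq (vecMulVec η₁ η₂ - vecMulVec v c₂)} := by
      refine ⟨fun j => η₂ j / t, ?_⟩
      rw [← hCeq]
      simp [frobSq]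
    have := hlb 0 h0mem
    linarith
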